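/- Let Φ be functional dependencies on V, C ⊆ V close, and A, B ∈ V\C distinct. If A is not C-minimal (i.e., there exists D ∈ V\C with D ∈ cl({A}∪C) but A ∉ cl({D}∪C)), then the inequality I(A;B|C) ≥ 0 is redundant: for every polymatroid h satisfying Φ, I_h(A;B|C) = I_h(D;B|C) + I_h(A;B|C∪{D}), so I(A;B|C) ≥ 0 is implied by I(D;B|C) ≥ 0 and I(A;B|C∪{D}) ≥ 0. -/
import Mathlib


open Finset
open scoped Classical

variable {V : Type*}

/-- A polymatroid: normalized, monotone, submodular set function. -/
def IsPolymatroid [Fintype V] [DecidableEq V] (h : Finset V → ℝ) : Prop :=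
  h ∅ = 0 ∧ (∀ S T : Finset V, S ⊆ T → h S ≤ h T) ∧
    ∀ S T : Finset V, h (S ∪ T) + h (S ∩ T) ≤ h S + h T

/-- `h` satisfies the functional dependencies `Φ`: `H_h(X | Y) = 0` for each `(X, Y) ∈ Φ`. -/
def SatisfiesFD [Fintype V] [DecidableEq V] (h : Finset V → ℝ)
    (Φ : Finset (Finset V × Finset V)) : Prop :=
  ∀ p ∈ Φ, h (p.1 ∪ p.2) = h p.2

/-- Closure of `C` under the functional dependencies `Φ`. -/
noncomputable def closureFD [Fintype V] [DecidableEq V] (Φ : Finset (Finset V × Finset V))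
    (C : Finset V) : Finset V :=
  Finset.univ.filter (fun a => ∀ h : Finset V → ℝ, IsPolymatroid h → SatisfiesFD h Φ →
    h (insert a C) = h C)

/-- Conditional mutual information `I_h(A;B|C)` of singletons. -/
def Ih [DecidableEq V] (h : Finset V → ℝ) (A B : V) (C : Finset V) : ℝ :=
  h (insert A C) + h (insert B C) - h (insert A (insert B C)) - h C

/-- `A ∼_C B`: `A` and `B` imply each other conditioned on `C`. -/
def SimC [Fintype V] [DecidableEq V] (Φ : Finset (Finset V × Finset V)) (C : Finset V)
    (A B : V) : Prop :=
  B ∈ closureFD Φ (insert A C) ∧ A ∈ closureFD Φ (insert B C)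

/-- `A` is `C`-minimal. -/
def CMinimal [Fintype V] [DecidableEq V] (Φ : Finset (Finset V × Finset V)) (C : Finset V)
    (A : V) : Prop :=
  A ∉ C ∧ ∀ B : V, B ∉ C → B ∈ closureFD Φ (insert A C) → A ∈ closureFD Φ (insert B C)
/-- Reduction 1: if `A` is not `C`-minimal, witnessed by `D`, then
`I_h(A;B|C) = I_h(D;B|C) + I_h(A;B|C∪{D})` for every polymatroid `h` satisfying `Φ`,
so `I(A;B|C) ≥ 0` is redundant. -/
theorem stmt9 [Fintype V] [DecidableEq V] (Φ : Finset (Finset V × Finset V))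
    (C : Finset V) (hC : closureFD Φ C = C) (A B D : V)
    (hA : A ∉ C) (hB : B ∉ C) (hAB : A ≠ B) (hD : D ∉ C)
    (hD1 : D ∈ closureFD Φ (insert A C)) (hD2 : A ∉ closureFD Φ (insert D C)) :
    ∀ h : Finset V → ℝ, IsPolymatroid h → SatisfiesFD h Φ →
      Ih h A B C = Ih h D B C + Ih h A B (insert D C) := by
  intro h hpoly hsat
  obtain ⟨h0, hmono, hsub⟩ := hpoly
  have hDA : h (insert D (insert A C)) = h (insert A C) := by
    simp only [closureFD, Finset.mem_filter] at hD1
    exact hD1.2 h ⟨h0, hmono, hsub⟩ hsat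
  have key : ∀ Y : Finset V, insert A C ⊆ Y → h (insert D Y) = h Y := by
    intro Y hY
    have h1 := hsub (insert D (insert A C)) Y
    have hu : insert D (insert A C) ∪ Y = insert D Y := by
      rw [Finset.insert_union, Finset.union_eq_right.mpr hY]
    have hi : insert A C ⊆ insert D (insert A C) ∩ Y :=
      Finset.subset_inter (Finset.subset_insert _ _) hY
    have h2 := hmono _ _ hi
    have h3 := hmono Y (insert D Y) (Finset.subset_insert _ _)
    rw [hu, hDA] at h1
    linarith
  have e1 : insert A (insert D C) = insert D (insert A C) := Finset.insert_comm _ _ _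
  have e2 : insert B (insert D C) = insert D (insert B C) := Finset.insert_comm _ _ _
  have e3 : insert A (insert B (insert D C)) = insert D (insert A (insert B C)) := by
    rw [Finset.insert_comm B D C, Finset.insert_comm A D (insert B C)]
  have e4 : insert A (insert D (insert B C)) = insert D (insert A (insert B C)) :=
    Finset.insert_comm _ _ _
  have k1 : h (insert D (insert A (insert B C))) = h (insert A (insert B C)) :=
    key _ (Finset.insert_subset_insert _ (Finset.subset_insert _ _))
  simp only [Ih, e1, e2, e3, e4, hDA, k1]
  ring
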